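/- Let A be a Hermitian positive definite n×n matrix and let V = I - A/‖A‖₂ (or more generally I - A/c with c ≥ ‖A‖₂ the spectral norm bound). Then for any α with 0 < α ≤ 1/c, the inequality ‖Vx‖²_A ≤ ‖x‖²_A - α‖x‖²_{A²} holds for all x ∈ ℂⁿ, i.e. V^H A V ≤ A - α A². -/

import Mathlib

open Matrix
open scoped ComplexOrder

lemma psd_smul_aux {n : ℕ} {M : Matrix (Fin n) (Fin n) ℂ} (hM : M.PosSemidef)
    {r : ℝ} (hr : 0 ≤ r) : ((r : ℂ) • M).PosSemidef := by
  rw [posSemidef_iff_dotProduct_mulVec]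
  constructor
  · unfold Matrix.IsHermitian
    rw [conjTranspose_smul, hM.isHermitian.eq]
    simp
  · intro x
    rw [smul_mulVec, dotProduct_smul]
    exact mul_nonneg (by exact_mod_cast hr) (hM.dotProduct_mulVec_nonneg x)

/-- For Hermitian positive definite `A` with spectral bound `c`
(`A ≤ c I`), `V = I - A/c`, and `0 < α ≤ 1/c`, one has
`‖Vx‖²_A ≤ ‖x‖²_A - α‖x‖²_{A²}` for all `x`, i.e. `Vᴴ A V ≤ A - α A²`. -/
theorem stmt_0 {n : ℕ} (A : Matrix (Fin n) (Fin n) ℂ) (hA : A.PosDef)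
    (c : ℝ) (hc : 0 < c)
    (hbound : ((c : ℂ) • (1 : Matrix (Fin n) (Fin n) ℂ) - A).PosSemidef)
    (α : ℝ) (hα0 : 0 < α) (hα : α ≤ 1 / c)
    (V : Matrix (Fin n) (Fin n) ℂ)
    (hV : V = 1 - (c : ℂ)⁻¹ • A) :
    (A - (α : ℂ) • (A * A) - Vᴴ * A * V).PosSemidef ∧
    ∀ x : Fin n → ℂ,
      (star (V.mulVec x) ⬝ᵥ A.mulVec (V.mulVec x)).re ≤
        (star x ⬝ᵥ A.mulVec x).re - α * (star x ⬝ᵥ (A * A).mulVec x).re := by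
  -- the algebraic identity
  have hM : A - (α : ℂ) • (A * A) - Vᴴ * A * V =
      A * (((2 * (c:ℂ)⁻¹ - α) • 1 - ((c:ℂ)⁻¹^2) • A)) * A := by
    subst hV
    have h := hA.isHermitian.eq
    simp only [conjTranspose_sub, conjTranspose_one, conjTranspose_smul, h, star_inv₀,
      Complex.star_def, Complex.conj_ofReal, Matrix.mul_sub, Matrix.sub_mul,
      Matrix.mul_one, Matrix.one_mul, Matrix.smul_mul, Matrix.mul_smul, sub_smul,
      smul_sub, smul_smul]
    ring_nf
    module
  -- the middle factor is PSD
  have hc2 : (0:ℝ) ≤ c⁻¹ ^ 2 := by positivity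
  have hca : (0:ℝ) ≤ c - α * c ^ 2 := by
    have : α * c ≤ 1 := by
      rw [le_div_iff₀ hc] at hα; linarith
    nlinarith
  have hBeq : ((2 * (c:ℂ)⁻¹ - α) • 1 - ((c:ℂ)⁻¹^2) • A : Matrix (Fin n) (Fin n) ℂ) =
      ((c⁻¹ ^ 2 : ℝ) : ℂ) • (((c : ℂ) • (1 : Matrix (Fin n) (Fin n) ℂ) - A) +
        (((c - α * c ^ 2 : ℝ)) : ℂ) • 1) := by
    have hc' : (c : ℂ) ≠ 0 := by exact_mod_cast hc.ne'
    push_cast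
    match_scalars <;> field_simp <;> ring
  have hB : (((2 * (c:ℂ)⁻¹ - α) • 1 - ((c:ℂ)⁻¹^2) • A : Matrix (Fin n) (Fin n) ℂ)).PosSemidef := by
    rw [hBeq]
    exact psd_smul_aux (hbound.add (psd_smul_aux Matrix.PosSemidef.one hca)) hc2
  have hP : (A - (α : ℂ) • (A * A) - Vᴴ * A * V).PosSemidef := by
    rw [hM]
    have := hB.conjTranspose_mul_mul_same A
    rwa [hA.isHermitian.eq] at this
  refine ⟨hP, fun x => ?_⟩
  have h0 := hP.re_dotProduct_nonneg x
  have key : star x ⬝ᵥ (Vᴴ * A * V) *ᵥ x = star (V *ᵥ x) ⬝ᵥ A *ᵥ (V *ᵥ x) := by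
    simp [star_mulVec, dotProduct_mulVec, vecMul_vecMul, Matrix.mul_assoc]
  rw [Matrix.sub_mulVec, Matrix.sub_mulVec, dotProduct_sub, dotProduct_sub,
    smul_mulVec, dotProduct_smul, key] at h0
  simp only [RCLike.re_to_complex, Complex.sub_re, smul_eq_mul, Complex.mul_re,
    Complex.ofReal_re, Complex.ofReal_im, zero_mul, sub_zero] at h0 ⊢
  linarith
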